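/- Let N_j → ∞ and for each i = 1,…,q let f_i : ℕ → ℂ be a q-limit periodic function approximated in the seminorm ‖f‖_q = (limsup_{x→∞} (1/x) Σ_{n ≤ x} |f(n)|^q)^{1/q} by N_j-periodic functions f_{ij} (i.e., ‖f_i − f_{ij}‖_q → 0 as j → ∞). Then lim_{x→∞} (1/x) Σ_{1 ≤ t ≤ x} f_1(t)⋯f_q(t) exists and equals lim_{j→∞} N_j^{q−1} Σ_{m ∈ Z/N_jZ} F_{1j}(m)⋯F_{qj}(m), where F_{ij}(m) = f_{ij}(m)/N_j. -/

import Mathlib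

open Filter

open Finset MeasureTheory ENNReal

/-- The seminorm `‖f‖_q = (limsup_{x→∞} (1/x) ∑_{n ≤ x} |f(n)|^q)^{1/q}`. -/
noncomputable def semiNormQ (q : ℕ) (f : ℕ → ℂ) : ℝ :=
  (Filter.atTop.limsup fun x : ℕ =>
      (1 / (x : ℝ)) * ∑ n ∈ Finset.Icc 1 x, ‖f n‖ ^ q) ^ ((1 : ℝ) / q)

lemma per_shift {h : ℕ → ℂ} {N : ℕ} (hp : ∀ n, h (n + N) = h n) :
    ∀ (k n : ℕ), h (n + N * k) = h n := by
  intro k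
  induction k with
  | zero => simp
  | succ k ih =>
    intro n
    have : n + N * (k + 1) = (n + N) + N * k := by ring
    rw [this, ih, hp]

lemma sum_range_per {h : ℕ → ℂ} {N : ℕ} (hp : ∀ n, h (n + N) = h n) (k : ℕ) :
    ∑ t ∈ range (N * k), h t = (k : ℂ) * ∑ m ∈ range N, h m := by
  induction k with
  | zero => simp
  | succ k ih =>
    have h1 : N * k ≤ N * (k + 1) := Nat.mul_le_mul_left _ (Nat.le_succ k)
    rw [← Finset.sum_range_add_sum_Ico h h1, ih, Finset.sum_Ico_eq_sum_range]
    have h2 : N * (k + 1) - N * k = N := by rw [Nat.mul_succ]; omega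
    rw [h2]
    have h3 : ∀ i, h (N * k + i) = h i := by
      intro i; rw [Nat.add_comm]; exact per_shift hp k i
    simp only [h3]
    push_cast
    ring

lemma sum_range_per_decomp {h : ℕ → ℂ} {N : ℕ} (hN : 0 < N) (hp : ∀ n, h (n + N) = h n)
    (x : ℕ) :
    ∑ t ∈ range x, h t
      = ((x / N : ℕ) : ℂ) * ∑ m ∈ range N, h m + ∑ m ∈ range (x % N), h m := by
  have hx : N * (x / N) ≤ x := Nat.mul_div_le x N
  rw [← Finset.sum_range_add_sum_Ico h hx, sum_range_per hp, Finset.sum_Ico_eq_sum_range]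
  congr 1
  have h2 : x - N * (x / N) = x % N := by
    have := Nat.div_add_mod x N
    omega
  rw [h2]
  apply Finset.sum_congr rfl
  intro i _
  rw [Nat.add_comm]; exact per_shift hp (x / N) i

lemma shift_period_sum {h : ℕ → ℂ} {N : ℕ} (hN : 0 < N) (hp : ∀ n, h (n + N) = h n) :
    ∑ m ∈ range N, h (1 + m) = ∑ m ∈ range N, h m := by
  have e1 : ∑ m ∈ range N, h (1 + m) = ∑ m ∈ Finset.Ico 1 (N + 1), h m := by
    rw [Finset.sum_Ico_eq_sum_range]
    simp
  have e2 : ∑ m ∈ Finset.Ico 1 (N + 1), h m = ∑ m ∈ Finset.Ico 1 N, h m + h N := by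
    rw [Finset.sum_Ico_succ_top hN]
  have e3 : ∑ m ∈ range N, h m = h 0 + ∑ m ∈ Finset.Ico 1 N, h m := by
    rw [Finset.range_eq_Ico, Finset.sum_eq_sum_Ico_succ_bot hN]
  have e4 : h N = h 0 := by simpa using hp 0
  rw [e1, e2, e3, e4]; ring

lemma tendsto_avg_periodic {h : ℕ → ℂ} {N : ℕ} (hN : 0 < N) (hp : ∀ n, h (n + N) = h n) :
    Tendsto (fun x : ℕ => (x : ℂ)⁻¹ * ∑ t ∈ Finset.Icc 1 x, h t) atTop
      (nhds ((N : ℂ)⁻¹ * ∑ m ∈ range N, h m)) := by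
  set S : ℂ := ∑ m ∈ range N, h m with hS
  set M : ℂ := (N : ℂ)⁻¹ * S with hM
  have hNne : (N : ℂ) ≠ 0 := Nat.cast_ne_zero.mpr hN.ne'
  -- rewrite Icc sum as shifted range sum
  have hIcc : ∀ x : ℕ, ∑ t ∈ Finset.Icc 1 x, h t = ∑ i ∈ range x, h (1 + i) := by
    intro x
    rw [show Finset.Icc 1 x = Finset.Ico 1 (x + 1) by rw [Finset.Ico_add_one_right_eq_Icc],
      Finset.sum_Ico_eq_sum_range]
    simp
  set h' : ℕ → ℂ := fun i => h (1 + i) with hh'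
  have hp' : ∀ n, h' (n + N) = h' n := by
    intro n; simp only [hh']; rw [show 1 + (n + N) = (1 + n) + N by ring, hp]
  have hS' : ∑ m ∈ range N, h' m = S := shift_period_sum hN hp
  -- uniform bound on |∑ - x * M|
  obtain ⟨C, hC0, hCb⟩ :
      ∃ C : ℝ, 0 ≤ C ∧ ∀ x : ℕ, ‖(∑ t ∈ Finset.Icc 1 x, h t) - (x : ℂ) * M‖ ≤ C := by
    refine ⟨(∑ m ∈ range N, ‖h' m‖) + ‖S‖, by positivity, fun x => ?_⟩
    rw [hIcc x, sum_range_per_decomp hN hp' x, hS']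
    have hxcast : (x : ℂ) = ((x / N : ℕ) : ℂ) * N + ((x % N : ℕ) : ℂ) := by
      exact_mod_cast (Nat.div_add_mod' x N).symm
    have key : ((x / N : ℕ) : ℂ) * S + (∑ m ∈ range (x % N), h' m) - (x : ℂ) * M
        = (∑ m ∈ range (x % N), h' m) - ((x % N : ℕ) : ℂ) * M := by
      rw [hxcast, hM]
      field_simp
      ring
    rw [key]
    refine (norm_sub_le _ _).trans (add_le_add ?_ ?_)
    · refine (norm_sum_le _ _).trans ?_
      apply Finset.sum_le_sum_of_subset_of_nonneg
      · exact Finset.range_subset_range.mpr (Nat.mod_lt x hN).le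
      · intro i _ _; positivity
    · rw [norm_mul, hM, norm_mul, norm_inv]
      have h1 : ‖((x % N : ℕ) : ℂ)‖ = ((x % N : ℕ) : ℝ) := by
        simp [Complex.norm_natCast]
      have h2 : ‖((N : ℕ) : ℂ)‖ = (N : ℝ) := by simp [Complex.norm_natCast]
      rw [h1, h2]
      have hxN : ((x % N : ℕ) : ℝ) ≤ (N : ℝ) := by
        exact_mod_cast (Nat.mod_lt x hN).le
      calc ((x % N : ℕ) : ℝ) * ((N : ℝ)⁻¹ * ‖S‖)
          ≤ (N : ℝ) * ((N : ℝ)⁻¹ * ‖S‖) := by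
            apply mul_le_mul_of_nonneg_right hxN; positivity
        _ = ‖S‖ := by
            field_simp
  -- conclude
  have key0 : Tendsto (fun x : ℕ => (x : ℂ)⁻¹ * (∑ t ∈ Finset.Icc 1 x, h t) - M)
      atTop (nhds 0) := by
    refine squeeze_zero_norm' (a := fun x : ℕ => C / (x : ℝ)) ?_ (tendsto_const_div_atTop_nhds_zero_nat C)
    filter_upwards [Filter.eventually_ge_atTop 1] with x hx
    have hxne : (x : ℂ) ≠ 0 := Nat.cast_ne_zero.mpr (by omega)
    have : (x : ℂ)⁻¹ * (∑ t ∈ Finset.Icc 1 x, h t) - M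
        = (x : ℂ)⁻¹ * ((∑ t ∈ Finset.Icc 1 x, h t) - (x : ℂ) * M) := by
      field_simp
    rw [this, norm_mul, norm_inv]
    have hxr : ‖(x : ℂ)‖ = (x : ℝ) := by simp [Complex.norm_natCast]
    rw [hxr, div_eq_inv_mul]
    apply mul_le_mul_of_nonneg_left (hCb x)
    positivity
  have := key0.add_const M
  simpa using this

lemma holder_ennreal {ι α : Type*} [DecidableEq ι] (s : Finset α) (T : Finset ι)
    (g : ι → α → ℝ≥0∞) {p : ι → ℝ} (hp : ∑ i ∈ T, p i = 1) (hp0 : ∀ i ∈ T, 0 ≤ p i) :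
    ∑ a ∈ s, ∏ i ∈ T, g i a ^ p i ≤ ∏ i ∈ T, (∑ a ∈ s, g i a) ^ p i := by
  classical
  letI : MeasurableSpace α := ⊤
  have key := ENNReal.lintegral_prod_norm_pow_le (μ := Measure.count.restrict (↑s : Set α))
    T (f := fun i a => g i a) (fun i _ => (measurable_from_top).aemeasurable) hp hp0
  have hs : MeasurableSet (↑s : Set α) := trivial
  have lint : ∀ (F : α → ℝ≥0∞),
      ∫⁻ a, F a ∂(Measure.count.restrict (↑s : Set α)) = ∑ a ∈ s, F a := by
    intro F
    rw [← lintegral_indicator hs, lintegral_count]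
    rw [tsum_eq_sum (s := s) (fun a ha => Set.indicator_of_notMem (by simpa using ha) F)]
    exact Finset.sum_congr rfl (fun a ha => Set.indicator_of_mem (by simpa using ha) F)
  rw [lint] at key
  refine key.trans (le_of_eq ?_)
  exact Finset.prod_congr rfl (fun i _ => by rw [lint])

lemma holder_real {ι α : Type*} [DecidableEq ι] (s : Finset α) (T : Finset ι) (q : ℕ)
    (hq : 1 ≤ q) (hT : T.card = q) (w : α → ℝ) (hw : ∀ a, 0 ≤ w a)
    (v : ι → α → ℝ) (hv : ∀ i a, 0 ≤ v i a) :
    ∑ a ∈ s, w a * ∏ i ∈ T, v i a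
      ≤ ∏ i ∈ T, (∑ a ∈ s, w a * v i a ^ q) ^ ((1 : ℝ) / q) := by
  have hq0 : (q : ℝ) ≠ 0 := by positivity
  have hp0 : (0 : ℝ) ≤ 1 / q := by positivity
  set g : ι → α → ℝ≥0∞ := fun i a => ENNReal.ofReal (w a * v i a ^ q) with hg
  have hpsum : ∑ _i ∈ T, (1 : ℝ) / q = 1 := by
    rw [Finset.sum_const, hT, nsmul_eq_mul]
    field_simp
  have key := holder_ennreal s T g hpsum (fun i _ => hp0)
  -- pointwise identity for the left side
  have hL : ∀ a, ∏ i ∈ T, g i a ^ ((1 : ℝ) / q) = ENNReal.ofReal (w a * ∏ i ∈ T, v i a) := by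
    intro a
    have hwa := hw a
    have hfac : ∀ i, g i a ^ ((1 : ℝ) / q)
        = ENNReal.ofReal (w a ^ ((1 : ℝ) / q) * v i a) := by
      intro i
      have hva := hv i a
      show ENNReal.ofReal (w a * v i a ^ q) ^ ((1 : ℝ) / q) = _
      rw [ENNReal.ofReal_rpow_of_nonneg (by positivity) hp0]
      congr 1
      rw [Real.mul_rpow hwa (by positivity)]
      congr 1
      rw [← Real.rpow_natCast (v i a) q, ← Real.rpow_mul hva]
      rw [show ((q : ℝ)) * (1 / (q : ℝ)) = 1 from by field_simp, Real.rpow_one]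
    simp only [hfac]
    rw [← ENNReal.ofReal_prod_of_nonneg (fun i _ => by
      have := hv i a
      positivity)]
    congr 1
    rw [Finset.prod_mul_distrib, Finset.prod_const, hT]
    congr 1
    rw [← Real.rpow_natCast (w a ^ ((1:ℝ)/q)) q, ← Real.rpow_mul hwa]
    rw [one_div_mul_cancel hq0, Real.rpow_one]
  have hLs : ∑ a ∈ s, ∏ i ∈ T, g i a ^ ((1 : ℝ) / q)
      = ENNReal.ofReal (∑ a ∈ s, w a * ∏ i ∈ T, v i a) := by
    rw [ENNReal.ofReal_sum_of_nonneg (fun a _ => by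
      have h1 := hw a
      have h2 := Finset.prod_nonneg (fun i (_ : i ∈ T) => hv i a)
      positivity)]
    exact Finset.sum_congr rfl (fun a _ => hL a)
  have hR : ∏ i ∈ T, (∑ a ∈ s, g i a) ^ ((1 : ℝ) / q)
      = ENNReal.ofReal (∏ i ∈ T, (∑ a ∈ s, w a * v i a ^ q) ^ ((1 : ℝ) / q)) := by
    have hsnn : ∀ i, (0:ℝ) ≤ ∑ a ∈ s, w a * v i a ^ q := fun i =>
      Finset.sum_nonneg (fun a _ => by have := hw a; have := hv i a; positivity)
    rw [ENNReal.ofReal_prod_of_nonneg (fun i _ => by have := hsnn i; positivity)]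
    apply Finset.prod_congr rfl
    intro i _
    have hsum : ∑ a ∈ s, g i a = ENNReal.ofReal (∑ a ∈ s, w a * v i a ^ q) := by
      rw [ENNReal.ofReal_sum_of_nonneg (fun a _ => by
        have := hw a; have := hv i a; positivity)]
    rw [hsum, ENNReal.ofReal_rpow_of_nonneg (hsnn i) hp0]
  rw [hLs, hR] at key
  rw [ENNReal.ofReal_le_ofReal_iff (Finset.prod_nonneg (fun i _ => by
    have : (0:ℝ) ≤ ∑ a ∈ s, w a * v i a ^ q :=
      Finset.sum_nonneg (fun a _ => by have := hw a; have := hv i a; positivity)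
    positivity))] at key
  exact key

lemma norm_prod_sub_prod {ι : Type*} [DecidableEq ι] (s : Finset ι) (a b : ι → ℂ) :
    ‖∏ i ∈ s, a i - ∏ i ∈ s, b i‖
      ≤ ∑ i ∈ s, ‖a i - b i‖ * ∏ k ∈ s.erase i, max ‖a k‖ ‖b k‖ := by
  classical
  induction s using Finset.induction_on with
  | empty => simp
  | @insert j s hj ih =>
    rw [Finset.prod_insert hj, Finset.prod_insert hj]
    have split : a j * ∏ i ∈ s, a i - b j * ∏ i ∈ s, b i
        = (a j - b j) * ∏ i ∈ s, a i + b j * (∏ i ∈ s, a i - ∏ i ∈ s, b i) := by ring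
    rw [split]
    refine (norm_add_le _ _).trans ?_
    rw [Finset.sum_insert hj, Finset.erase_insert hj]
    refine add_le_add ?_ ?_
    · rw [norm_mul]
      apply mul_le_mul_of_nonneg_left _ (norm_nonneg _)
      rw [norm_prod]
      exact Finset.prod_le_prod (fun k _ => norm_nonneg _) (fun k _ => le_max_left _ _)
    · rw [norm_mul]
      refine (mul_le_mul (le_max_right ‖a j‖ ‖b j‖) ih (norm_nonneg _)
        (le_trans (norm_nonneg _) (le_max_left _ _))).trans ?_
      rw [Finset.mul_sum]
      apply Finset.sum_le_sum
      intro i hi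
      have hji : j ≠ i := fun h => hj (h ▸ hi)
      have herase : (insert j s).erase i = insert j (s.erase i) := by
        exact Finset.erase_insert_of_ne hji
      rw [herase, Finset.prod_insert (fun h => hj (Finset.mem_of_mem_erase h))]
      have h1 : (0:ℝ) ≤ ‖a i - b i‖ := norm_nonneg _
      have h2 : (0:ℝ) ≤ ∏ k ∈ s.erase i, max ‖a k‖ ‖b k‖ :=
        Finset.prod_nonneg (fun k _ => le_trans (norm_nonneg _) (le_max_left _ _))
      nlinarith [le_trans (norm_nonneg (a j)) (le_max_left ‖a j‖ ‖b j‖)]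

lemma rpow_pow_cancel {r : ℝ} (hr : 0 ≤ r) {q : ℕ} (hq : 1 ≤ q) :
    (r ^ ((1 : ℝ) / q)) ^ (q : ℕ) = r := by
  have hq0 : (q : ℝ) ≠ 0 := Nat.cast_ne_zero.mpr (by omega)
  rw [← Real.rpow_natCast (r ^ ((1 : ℝ) / q)) q, ← Real.rpow_mul hr,
    one_div_mul_cancel hq0, Real.rpow_one]

lemma pow_rpow_cancel {a : ℝ} (ha : 0 ≤ a) {q : ℕ} (hq : 1 ≤ q) :
    ((a ^ (q : ℕ)) : ℝ) ^ ((1 : ℝ) / q) = a := by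
  have hq0 : (q : ℝ) ≠ 0 := Nat.cast_ne_zero.mpr (by omega)
  rw [← Real.rpow_natCast a q, ← Real.rpow_mul ha, mul_one_div, div_self hq0, Real.rpow_one]

lemma limsup_nonneg' {u : ℕ → ℝ} (h0 : ∀ x, 0 ≤ u x)
    (hb : IsBoundedUnder (· ≤ ·) atTop u) : 0 ≤ Filter.limsup u atTop :=
  Filter.le_limsup_of_frequently_le (Filter.Frequently.of_forall h0) hb

lemma ev_le_of_limsup_lt {u : ℕ → ℝ} {b : ℝ} (h : Filter.limsup u atTop < b)
    (hb : IsBoundedUnder (· ≤ ·) atTop u) : ∀ᶠ x in atTop, u x ≤ b :=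
  (Filter.eventually_lt_of_limsup_lt h hb).mono (fun _ h => h.le)

lemma max_pow_le {a b : ℝ} (ha : 0 ≤ a) (hb : 0 ≤ b) (q : ℕ) :
    max a b ^ q ≤ a ^ q + b ^ q := by
  rcases max_cases a b with ⟨h1, _⟩ | ⟨h1, _⟩ <;> rw [h1]
  · exact le_add_of_nonneg_right (by positivity)
  · exact le_add_of_nonneg_left (by positivity)

lemma add_pow_le_two_pow {a b : ℝ} (ha : 0 ≤ a) (hb : 0 ≤ b) (q : ℕ) :
    (a + b) ^ q ≤ 2 ^ q * (a ^ q + b ^ q) := by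
  have h1 : a + b ≤ 2 * max a b := by
    rcases max_cases a b with ⟨h1, h2⟩ | ⟨h1, h2⟩ <;> rw [h1] <;> linarith
  calc (a + b) ^ q ≤ (2 * max a b) ^ q := by
        apply pow_le_pow_left₀ (by positivity) h1
    _ = 2 ^ q * max a b ^ q := by rw [mul_pow]
    _ ≤ 2 ^ q * (a ^ q + b ^ q) := by
        apply mul_le_mul_of_nonneg_left (max_pow_le ha hb q) (by positivity)

lemma holder_step {q : ℕ} (hq : 1 ≤ q) (x : ℕ) (d g : Fin q → ℕ → ℝ)
    (hd : ∀ i t, 0 ≤ d i t) (hg : ∀ i t, 0 ≤ g i t) (i : Fin q) :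
    (1 / (x : ℝ)) * ∑ t ∈ Finset.Icc 1 x, d i t * ∏ k ∈ Finset.univ.erase i, g k t
      ≤ ((1 / (x : ℝ)) * ∑ t ∈ Finset.Icc 1 x, d i t ^ q) ^ ((1 : ℝ) / q) *
        ∏ k ∈ Finset.univ.erase i,
          ((1 / (x : ℝ)) * ∑ t ∈ Finset.Icc 1 x, g k t ^ q) ^ ((1 : ℝ) / q) := by
  classical
  set v : Fin q → ℕ → ℝ := fun k t => if k = i then d i t else g k t with hv
  have hvnn : ∀ k t, 0 ≤ v k t := by
    intro k t; simp only [hv]; split <;> [exact hd i t; exact hg k t]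
  have key := holder_real (Finset.Icc 1 x) Finset.univ q hq
    (by simp) (fun _ => 1 / (x : ℝ)) (fun _ => by positivity) v hvnn
  have hL : ∀ t, ∏ k ∈ Finset.univ, v k t = d i t * ∏ k ∈ Finset.univ.erase i, g k t := by
    intro t
    rw [← Finset.mul_prod_erase Finset.univ _ (Finset.mem_univ i)]
    congr 1
    · simp [hv]
    · apply Finset.prod_congr rfl
      intro k hk
      have : k ≠ i := Finset.ne_of_mem_erase hk
      simp [hv, this]
  have hsum : ∀ (u : ℕ → ℝ), ∑ t ∈ Finset.Icc 1 x, (1 / (x:ℝ)) * u t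
      = (1 / (x:ℝ)) * ∑ t ∈ Finset.Icc 1 x, u t := by
    intro u; rw [Finset.mul_sum]
  calc (1 / (x : ℝ)) * ∑ t ∈ Finset.Icc 1 x, d i t * ∏ k ∈ Finset.univ.erase i, g k t
      = ∑ t ∈ Finset.Icc 1 x, (1 / (x:ℝ)) * ∏ k ∈ Finset.univ, v k t := by
        rw [hsum]
        congr 1
        exact Finset.sum_congr rfl (fun t _ => (hL t).symm)
    _ ≤ ∏ k ∈ Finset.univ, (∑ t ∈ Finset.Icc 1 x, (1 / (x:ℝ)) * v k t ^ q) ^ ((1:ℝ)/q) := key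
    _ = ((1 / (x : ℝ)) * ∑ t ∈ Finset.Icc 1 x, d i t ^ q) ^ ((1 : ℝ) / q) *
        ∏ k ∈ Finset.univ.erase i,
          ((1 / (x : ℝ)) * ∑ t ∈ Finset.Icc 1 x, g k t ^ q) ^ ((1 : ℝ) / q) := by
        rw [← Finset.mul_prod_erase Finset.univ _ (Finset.mem_univ i)]
        congr 1
        · rw [hsum]
          congr 2
          apply Finset.sum_congr rfl
          intro t _; simp [hv]
        · apply Finset.prod_congr rfl
          intro k hk
          have hki : k ≠ i := Finset.ne_of_mem_erase hk
          rw [hsum]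
          congr 2
          apply Finset.sum_congr rfl
          intro t _; simp [hv, hki]


lemma step3_lemma {q : ℕ} (hq : 1 ≤ q) (F Fa : Fin q → ℕ → ℂ) (x : ℕ) :
    ‖(x:ℂ)⁻¹ * ∑ t ∈ Finset.Icc 1 x, ∏ i, F i t
        - (x:ℂ)⁻¹ * ∑ t ∈ Finset.Icc 1 x, ∏ i, Fa i t‖
      ≤ ∑ i, ((1/(x:ℝ)) * ∑ t ∈ Finset.Icc 1 x, ‖F i t - Fa i t‖ ^ q) ^ ((1:ℝ)/q)
          * ∏ k ∈ Finset.univ.erase i,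
            ((1/(x:ℝ)) * ∑ t ∈ Finset.Icc 1 x,
              (max (‖F k t‖) (‖Fa k t‖)) ^ q) ^ ((1:ℝ)/q) := by
  classical
  set d : Fin q → ℕ → ℝ := fun i t => ‖F i t - Fa i t‖ with hd
  set g : Fin q → ℕ → ℝ := fun k t => max (‖F k t‖) (‖Fa k t‖) with hg
  have hd0 : ∀ i t, 0 ≤ d i t := fun i t => norm_nonneg _
  have hg0 : ∀ k t, 0 ≤ g k t := fun k t =>
    le_trans (norm_nonneg _) (le_max_left _ _)
  have e1 : (x:ℂ)⁻¹ * ∑ t ∈ Finset.Icc 1 x, ∏ i, F i t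
      - (x:ℂ)⁻¹ * ∑ t ∈ Finset.Icc 1 x, ∏ i, Fa i t
      = (x:ℂ)⁻¹ * ∑ t ∈ Finset.Icc 1 x, (∏ i, F i t - ∏ i, Fa i t) := by
    rw [Finset.sum_sub_distrib, mul_sub]
  rw [e1, norm_mul, norm_inv]
  have hxn : ‖(x:ℂ)‖ = (x:ℝ) := by simp
  rw [hxn]
  have step1 : (x:ℝ)⁻¹ * ‖∑ t ∈ Finset.Icc 1 x, (∏ i, F i t - ∏ i, Fa i t)‖
      ≤ (x:ℝ)⁻¹ * ∑ t ∈ Finset.Icc 1 x, ∑ i, d i t * ∏ k ∈ Finset.univ.erase i, g k t := by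
    apply mul_le_mul_of_nonneg_left _ (by positivity)
    refine (norm_sum_le _ _).trans (Finset.sum_le_sum (fun t _ => ?_))
    have := norm_prod_sub_prod Finset.univ (fun i => F i t) (fun i => Fa i t)
    simpa [hd, hg] using this
  refine step1.trans ?_
  have swap : (x:ℝ)⁻¹ * ∑ t ∈ Finset.Icc 1 x, ∑ i, d i t * ∏ k ∈ Finset.univ.erase i, g k t
      = ∑ i, (1/(x:ℝ)) * ∑ t ∈ Finset.Icc 1 x, d i t * ∏ k ∈ Finset.univ.erase i, g k t := by
    rw [Finset.sum_comm, Finset.mul_sum]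
    exact Finset.sum_congr rfl (fun i _ => by rw [one_div])
  rw [swap]
  exact Finset.sum_le_sum (fun i _ => holder_step hq x d g hd0 hg0 i)


theorem stmt_19 (q : ℕ) (hq : 1 ≤ q) (f : Fin q → ℕ → ℂ)
    (N : ℕ → ℕ) (hNpos : ∀ j, 0 < N j) (hN : Tendsto N atTop atTop)
    (fa : Fin q → ℕ → ℕ → ℂ)
    (hper : ∀ i j n, fa i j (n + N j) = fa i j n)
    (hfin : ∀ i, IsBoundedUnder (· ≤ ·) atTop
      (fun x : ℕ => (1 / (x : ℝ)) * ∑ n ∈ Finset.Icc 1 x, ‖f i n‖ ^ q))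
    (hbdd : ∀ i, ∃ B : ℝ, ∀ j, semiNormQ q (fa i j) ≤ B)
    (happrox : ∀ i, Tendsto (fun j => semiNormQ q (fun n => f i n - fa i j n)) atTop (nhds 0)) :
    ∃ L : ℂ,
      Tendsto (fun x : ℕ => ((x : ℂ))⁻¹ * ∑ t ∈ Finset.Icc 1 x, ∏ i, f i t)
        atTop (nhds L) ∧
      Tendsto (fun j => ((N j : ℂ)) ^ (q - 1) *
          ∑ m ∈ Finset.range (N j), ∏ i, (fa i j m / (N j : ℂ)))
        atTop (nhds L) := by
  classical
  have hq0R : ((q : ℝ)) ≠ 0 := Nat.cast_ne_zero.mpr (by omega)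
  have hp0 : (0:ℝ) ≤ 1 / q := by positivity
  set P : ℕ → ℂ := fun x => ((x : ℂ))⁻¹ * ∑ t ∈ Finset.Icc 1 x, ∏ i, f i t with hPdef
  set Qq : ℕ → ℕ → ℂ :=
    fun j x => ((x : ℂ))⁻¹ * ∑ t ∈ Finset.Icc 1 x, ∏ i, fa i j t with hQdef
  set M : ℕ → ℂ :=
    fun j => ((N j : ℂ))⁻¹ * ∑ m ∈ Finset.range (N j), ∏ i, fa i j m with hMdef
  set Af : Fin q → ℕ → ℝ :=
    fun i x => (1 / (x : ℝ)) * ∑ n ∈ Finset.Icc 1 x, ‖f i n‖ ^ q with hAfdef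
  set Aa : Fin q → ℕ → ℕ → ℝ :=
    fun i j x => (1 / (x : ℝ)) * ∑ n ∈ Finset.Icc 1 x, ‖fa i j n‖ ^ q with hAadef
  set Ad : Fin q → ℕ → ℕ → ℝ :=
    fun i j x => (1 / (x : ℝ)) * ∑ n ∈ Finset.Icc 1 x,
      ‖f i n - fa i j n‖ ^ q with hAddef
  set Ag : Fin q → ℕ → ℕ → ℝ :=
    fun k j x => (1 / (x : ℝ)) * ∑ n ∈ Finset.Icc 1 x,
      (max (‖f k n‖) (‖fa k j n‖)) ^ q with hAgdef
  -- nonnegativity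
  have habs0 : ∀ (z : ℂ), (0:ℝ) ≤ ‖z‖ := fun z => norm_nonneg _
  have hAf0 : ∀ i x, 0 ≤ Af i x := by
    intro i x
    apply mul_nonneg (by positivity)
    exact Finset.sum_nonneg fun n _ => pow_nonneg (habs0 _) _
  have hAa0 : ∀ i j x, 0 ≤ Aa i j x := by
    intro i j x
    apply mul_nonneg (by positivity)
    exact Finset.sum_nonneg fun n _ => pow_nonneg (habs0 _) _
  have hAd0 : ∀ i j x, 0 ≤ Ad i j x := by
    intro i j x
    apply mul_nonneg (by positivity)
    exact Finset.sum_nonneg fun n _ => pow_nonneg (habs0 _) _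
  have hAg0 : ∀ k j x, 0 ≤ Ag k j x := by
    intro k j x
    apply mul_nonneg (by positivity)
    exact Finset.sum_nonneg fun n _ =>
      pow_nonneg (le_trans (habs0 _) (le_max_left _ _)) _
  -- Step 1: periodic averages converge
  have hQM : ∀ j, Tendsto (Qq j) atTop (nhds (M j)) := by
    intro j
    exact tendsto_avg_periodic (hNpos j)
      (fun n => Finset.prod_congr rfl (fun i _ => hper i j n))
  -- Step 2: bounds for Aa
  set K : Fin q → ℕ → ℝ :=
    fun i j => ∑ m ∈ Finset.range (N j), ‖fa i j m‖ ^ q with hKdef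
  have hK0 : ∀ i j, 0 ≤ K i j := fun i j =>
    Finset.sum_nonneg fun m _ => pow_nonneg (habs0 _) _
  have hAa_le : ∀ i j x, Aa i j x ≤ K i j := by
    intro i j x
    rcases Nat.eq_zero_or_pos x with hx | hx
    · subst hx; simp [hAadef, hK0 i j]
    have hterm : ∀ n, ‖fa i j n‖ ^ q ≤ K i j := by
      intro n
      have hmod : fa i j n = fa i j (n % N j) := by
        exact (Function.Periodic.map_mod_nat (fun m => hper i j m) n).symm
      rw [hmod]
      exact Finset.single_le_sum (fun m _ => pow_nonneg (habs0 _) _)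
        (Finset.mem_range.mpr (Nat.mod_lt _ (hNpos j)))
    have hsum : ∑ n ∈ Finset.Icc 1 x, ‖fa i j n‖ ^ q ≤ (x : ℝ) * K i j := by
      calc ∑ n ∈ Finset.Icc 1 x, ‖fa i j n‖ ^ q
          ≤ ∑ _n ∈ Finset.Icc 1 x, K i j := Finset.sum_le_sum (fun n _ => hterm n)
        _ = (x : ℝ) * K i j := by
            rw [Finset.sum_const, Nat.card_Icc, nsmul_eq_mul]
            norm_num
    show (1 / (x:ℝ)) * ∑ n ∈ Finset.Icc 1 x, ‖fa i j n‖ ^ q ≤ K i j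
    calc (1 / (x:ℝ)) * ∑ n ∈ Finset.Icc 1 x, ‖fa i j n‖ ^ q
        ≤ (1 / (x:ℝ)) * ((x : ℝ) * K i j) := by
          apply mul_le_mul_of_nonneg_left hsum (by positivity)
      _ = K i j := by
          have : (x:ℝ) ≠ 0 := by positivity
          field_simp
  have hAaBound : ∀ i j, IsBoundedUnder (· ≤ ·) atTop (Aa i j) :=
    fun i j => ⟨K i j, Filter.eventually_map.mpr
      (Filter.Eventually.of_forall (fun x => hAa_le i j x))⟩
  -- B bounds
  choose B hB using hbdd
  set B' : Fin q → ℝ := fun i => max (B i) 0 with hB'def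
  have hB'0 : ∀ i, 0 ≤ B' i := fun i => le_max_right _ _
  have hAa_limsup : ∀ i j, Filter.limsup (Aa i j) atTop ≤ B' i ^ q := by
    intro i j
    have h0 : 0 ≤ Filter.limsup (Aa i j) atTop :=
      limsup_nonneg' (hAa0 i j) (hAaBound i j)
    have h1 : (Filter.limsup (Aa i j) atTop) ^ ((1:ℝ)/q) ≤ B' i :=
      le_trans (hB i j) (le_max_left _ _)
    calc Filter.limsup (Aa i j) atTop
        = ((Filter.limsup (Aa i j) atTop) ^ ((1:ℝ)/q)) ^ (q : ℕ) :=
          (rpow_pow_cancel h0 hq).symm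
      _ ≤ B' i ^ q := pow_le_pow_left₀ (Real.rpow_nonneg h0 _) h1 q
  -- Ad pointwise bound and boundedness
  have hAd_le : ∀ i j x, Ad i j x ≤ 2 ^ q * (Af i x + Aa i j x) := by
    intro i j x
    have hterm : ∀ n, ‖f i n - fa i j n‖ ^ q
        ≤ 2 ^ q * (‖f i n‖ ^ q + ‖fa i j n‖ ^ q) := by
      intro n
      have htri : ‖f i n - fa i j n‖
          ≤ ‖f i n‖ + ‖fa i j n‖ := by
        exact norm_sub_le (f i n) (fa i j n)
      calc ‖f i n - fa i j n‖ ^ q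
          ≤ (‖f i n‖ + ‖fa i j n‖) ^ q :=
            pow_le_pow_left₀ (habs0 _) htri q
        _ ≤ 2 ^ q * (‖f i n‖ ^ q + ‖fa i j n‖ ^ q) :=
            add_pow_le_two_pow (habs0 _) (habs0 _) q
    show (1 / (x:ℝ)) * ∑ n ∈ Finset.Icc 1 x, ‖f i n - fa i j n‖ ^ q
        ≤ 2 ^ q * (Af i x + Aa i j x)
    have h1 : ∑ n ∈ Finset.Icc 1 x, ‖f i n - fa i j n‖ ^ q
        ≤ 2 ^ q * ((∑ n ∈ Finset.Icc 1 x, ‖f i n‖ ^ q)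
            + ∑ n ∈ Finset.Icc 1 x, ‖fa i j n‖ ^ q) := by
      rw [mul_add, Finset.mul_sum, Finset.mul_sum, ← Finset.sum_add_distrib]
      refine Finset.sum_le_sum (fun n _ => ?_)
      rw [← mul_add]
      exact hterm n
    calc (1 / (x:ℝ)) * ∑ n ∈ Finset.Icc 1 x, ‖f i n - fa i j n‖ ^ q
        ≤ (1 / (x:ℝ)) * (2 ^ q * ((∑ n ∈ Finset.Icc 1 x, ‖f i n‖ ^ q)
            + ∑ n ∈ Finset.Icc 1 x, ‖fa i j n‖ ^ q)) :=
          mul_le_mul_of_nonneg_left h1 (by positivity)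
      _ = 2 ^ q * (Af i x + Aa i j x) := by
          simp only [hAfdef, hAadef]
          ring
  have hAdBound : ∀ i j, IsBoundedUnder (· ≤ ·) atTop (Ad i j) := by
    intro i j
    obtain ⟨U, hU⟩ := hfin i
    rw [Filter.eventually_map] at hU
    refine ⟨2 ^ q * (U + K i j), Filter.eventually_map.mpr ?_⟩
    filter_upwards [hU] with x hx
    refine (hAd_le i j x).trans ?_
    have h2 : (0:ℝ) ≤ 2 ^ q := by positivity
    apply mul_le_mul_of_nonneg_left _ h2
    exact add_le_add hx (hAa_le i j x)
  -- Ag pointwise bound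
  have hAg_le : ∀ k j x, Ag k j x ≤ Af k x + Aa k j x := by
    intro k j x
    show (1 / (x:ℝ)) * ∑ n ∈ Finset.Icc 1 x,
        (max (‖f k n‖) (‖fa k j n‖)) ^ q ≤ Af k x + Aa k j x
    have h1 : ∑ n ∈ Finset.Icc 1 x, (max (‖f k n‖) (‖fa k j n‖)) ^ q
        ≤ (∑ n ∈ Finset.Icc 1 x, ‖f k n‖ ^ q)
          + ∑ n ∈ Finset.Icc 1 x, ‖fa k j n‖ ^ q := by
      rw [← Finset.sum_add_distrib]
      exact Finset.sum_le_sum (fun n _ => max_pow_le (habs0 _) (habs0 _) q)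
    calc (1 / (x:ℝ)) * ∑ n ∈ Finset.Icc 1 x,
          (max (‖f k n‖) (‖fa k j n‖)) ^ q
        ≤ (1 / (x:ℝ)) * ((∑ n ∈ Finset.Icc 1 x, ‖f k n‖ ^ q)
            + ∑ n ∈ Finset.Icc 1 x, ‖fa k j n‖ ^ q) :=
          mul_le_mul_of_nonneg_left h1 (by positivity)
      _ = Af k x + Aa k j x := by
          simp only [hAfdef, hAadef]
          ring
  -- epsilon quantities
  set εq : Fin q → ℕ → ℝ := fun i j => Filter.limsup (Ad i j) atTop with hεqdef
  have hεq0 : ∀ i j, 0 ≤ εq i j := fun i j => limsup_nonneg' (hAd0 i j) (hAdBound i j)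
  have hsemi_d : ∀ i j, semiNormQ q (fun n => f i n - fa i j n) = (εq i j) ^ ((1:ℝ)/q) := by
    intro i j
    rfl
  have hεq_small : ∀ δ : ℝ, 0 < δ → ∀ᶠ j in atTop, ∀ i, εq i j ≤ δ := by
    intro δ hδ
    rw [Filter.eventually_all]
    intro i
    have hδq : (0:ℝ) < δ ^ ((1:ℝ)/q) := Real.rpow_pos_of_pos hδ _
    have hev := (happrox i).eventually (eventually_le_nhds hδq)
    filter_upwards [hev] with j hj
    rw [hsemi_d i j] at hj
    calc εq i j = ((εq i j) ^ ((1:ℝ)/q)) ^ (q:ℕ) := (rpow_pow_cancel (hεq0 i j) hq).symm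
      _ ≤ (δ ^ ((1:ℝ)/q)) ^ (q:ℕ) :=
          pow_le_pow_left₀ (Real.rpow_nonneg (hεq0 i j) _) hj q
      _ = δ := rpow_pow_cancel hδ.le hq
  -- constants and eventual bounds
  set C : Fin q → ℝ := fun k => Filter.limsup (Af k) atTop with hCdef
  have evAf : ∀ k, ∀ᶠ x in atTop, Af k x ≤ C k + 1 :=
    fun k => ev_le_of_limsup_lt (lt_add_of_pos_right _ one_pos) (hfin k)
  have evAa : ∀ k j, ∀ᶠ x in atTop, Aa k j x ≤ B' k ^ q + 1 :=
    fun k j => ev_le_of_limsup_lt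
      (lt_of_le_of_lt (hAa_limsup k j) (lt_add_one _)) (hAaBound k j)
  set Dm : Fin q → ℝ := fun k => max ((C k + 1) + (B' k ^ q + 1)) 1 with hDmdef
  have hDm1 : ∀ k, (1:ℝ) ≤ Dm k := fun k => le_max_right _ _
  set G : ℝ := ∏ k, (Dm k) ^ ((1:ℝ)/q) with hGdef
  have hfac1 : ∀ k, (1:ℝ) ≤ (Dm k) ^ ((1:ℝ)/q) := by
    intro k
    calc (1:ℝ) = (1:ℝ) ^ ((1:ℝ)/q) := (Real.one_rpow _).symm
      _ ≤ (Dm k) ^ ((1:ℝ)/q) := Real.rpow_le_rpow zero_le_one (hDm1 k) hp0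
  have hG1 : (1:ℝ) ≤ G := by
    rw [hGdef]
    calc (1:ℝ) = ∏ _k : Fin q, (1:ℝ) := by simp
      _ ≤ ∏ k, (Dm k) ^ ((1:ℝ)/q) :=
          Finset.prod_le_prod (fun k _ => zero_le_one) (fun k _ => hfac1 k)
  have hG0 : (0:ℝ) < G := lt_of_lt_of_le one_pos hG1
  have evAg : ∀ k j, ∀ᶠ x in atTop, Ag k j x ≤ Dm k := by
    intro k j
    filter_upwards [evAf k, evAa k j] with x h1 h2
    calc Ag k j x ≤ Af k x + Aa k j x := hAg_le k j x
      _ ≤ (C k + 1) + (B' k ^ q + 1) := add_le_add h1 h2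
      _ ≤ Dm k := le_max_left _ _
  -- pointwise Hölder estimate
  have step3 : ∀ j x, ‖P x - Qq j x‖
      ≤ ∑ i, (Ad i j x) ^ ((1:ℝ)/q)
          * ∏ k ∈ Finset.univ.erase i, (Ag k j x) ^ ((1:ℝ)/q) := by
    intro j x
    exact step3_lemma hq f (fun i => fa i j) x
  -- the key estimate
  have key : ∀ η : ℝ, 0 < η → ∀ᶠ j in atTop, ∀ᶠ x in atTop, ‖P x - Qq j x‖ ≤ η := by
    intro η hη
    set a : ℝ := η / (q * G) with hadef
    have ha : 0 < a := by
      apply div_pos hη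
      apply mul_pos _ hG0
      exact_mod_cast Nat.pos_of_ne_zero (by omega)
    set δ : ℝ := a ^ (q:ℕ) / 2 with hδdef
    have hδ : 0 < δ := by positivity
    filter_upwards [hεq_small δ hδ] with j hj
    have evAd : ∀ᶠ x in atTop, ∀ i, Ad i j x ≤ 2 * δ := by
      rw [Filter.eventually_all]
      intro i
      have : Filter.limsup (Ad i j) atTop < 2 * δ := by
        have := hj i
        simp only [hεqdef] at this
        linarith
      exact ev_le_of_limsup_lt this (hAdBound i j)
    have evAgAll : ∀ᶠ x in atTop, ∀ k, Ag k j x ≤ Dm k := by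
      rw [Filter.eventually_all]
      exact fun k => evAg k j
    filter_upwards [evAd, evAgAll] with x hAdx hAgx
    refine (step3 j x).trans ?_
    have hterm : ∀ i : Fin q, (Ad i j x) ^ ((1:ℝ)/q)
        * ∏ k ∈ Finset.univ.erase i, (Ag k j x) ^ ((1:ℝ)/q) ≤ a * G := by
      intro i
      have h1 : (Ad i j x) ^ ((1:ℝ)/q) ≤ a := by
        have h2δ : (2 * δ : ℝ) = a ^ (q:ℕ) := by
          rw [hδdef]; ring
        calc (Ad i j x) ^ ((1:ℝ)/q) ≤ (2 * δ) ^ ((1:ℝ)/q) :=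
              Real.rpow_le_rpow (hAd0 i j x) (hAdx i) hp0
          _ = (a ^ (q:ℕ)) ^ ((1:ℝ)/q) := by rw [h2δ]
          _ = a := pow_rpow_cancel ha.le hq
      have h2 : ∏ k ∈ Finset.univ.erase i, (Ag k j x) ^ ((1:ℝ)/q) ≤ G := by
        calc (∏ k ∈ Finset.univ.erase i, (Ag k j x) ^ ((1:ℝ)/q))
            ≤ (∏ k ∈ Finset.univ.erase i, (Dm k) ^ ((1:ℝ)/q)) := by
              apply Finset.prod_le_prod
              · exact fun k _ => Real.rpow_nonneg (hAg0 k j x) _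
              · exact fun k _ => Real.rpow_le_rpow (hAg0 k j x) (hAgx k) hp0
          _ ≤ G := by
              rw [hGdef, ← Finset.mul_prod_erase Finset.univ _ (Finset.mem_univ i)]
              exact le_mul_of_one_le_left
                (Finset.prod_nonneg (fun k _ => le_trans zero_le_one (hfac1 k)))
                (hfac1 i)
      exact mul_le_mul h1 h2
        (Finset.prod_nonneg (fun k _ => Real.rpow_nonneg (hAg0 k j x) _)) ha.le
    calc (∑ i, (Ad i j x) ^ ((1:ℝ)/q)
          * ∏ k ∈ Finset.univ.erase i, (Ag k j x) ^ ((1:ℝ)/q))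
        ≤ (∑ _i : Fin q, a * G) := Finset.sum_le_sum (fun i _ => hterm i)
      _ = (q:ℝ) * (a * G) := by
          rw [Finset.sum_const, Finset.card_univ, Fintype.card_fin, nsmul_eq_mul]
      _ = η := by
          rw [hadef]
          field_simp
  -- M is Cauchy
  have hCauchy : CauchySeq M := by
    rw [Metric.cauchySeq_iff']
    intro ε hε
    have hε3 : (0:ℝ) < ε / 3 := by linarith
    obtain ⟨j₀, hj₀⟩ := Filter.eventually_atTop.mp (key (ε / 3) hε3)
    refine ⟨j₀, fun n hn => ?_⟩
    have t1 : Tendsto (fun x => dist (Qq n x) (Qq j₀ x)) atTop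
        (nhds (dist (M n) (M j₀))) := (hQM n).dist (hQM j₀)
    have ev : ∀ᶠ x in atTop, dist (Qq n x) (Qq j₀ x) ≤ 2 * (ε / 3) := by
      filter_upwards [hj₀ n hn, hj₀ j₀ le_rfl] with x h1 h2
      calc dist (Qq n x) (Qq j₀ x) ≤ dist (Qq n x) (P x) + dist (P x) (Qq j₀ x) :=
            dist_triangle _ _ _
        _ ≤ ε / 3 + ε / 3 := by
            rw [dist_eq_norm, dist_eq_norm]
            exact add_le_add (by rw [norm_sub_rev]; exact h1) h2
        _ = 2 * (ε / 3) := by ring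
    have : dist (M n) (M j₀) ≤ 2 * (ε / 3) := le_of_tendsto t1 ev
    linarith
  obtain ⟨L, hL⟩ := cauchySeq_tendsto_of_complete hCauchy
  refine ⟨L, ?_, ?_⟩
  · -- first limit
    rw [Metric.tendsto_nhds]
    intro ε hε
    have hε4 : (0:ℝ) < ε / 4 := by linarith
    have h1 : ∀ᶠ j in atTop, dist (M j) L < ε / 4 := by
      have := hL (Metric.ball_mem_nhds L hε4)
      simpa [Metric.mem_ball] using this
    obtain ⟨j, hjk, hjM⟩ := ((key (ε / 4) hε4).and h1).exists
    have h2 : ∀ᶠ x in atTop, dist (Qq j x) (M j) < ε / 4 := by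
      have := (hQM j) (Metric.ball_mem_nhds (M j) hε4)
      simpa [Metric.mem_ball] using this
    filter_upwards [hjk, h2] with x hx1 hx2
    calc dist (P x) L ≤ dist (P x) (Qq j x) + dist (Qq j x) (M j) + dist (M j) L :=
          dist_triangle4 _ _ _ _
      _ ≤ ε / 4 + dist (Qq j x) (M j) + dist (M j) L := by
          rw [dist_eq_norm]
          exact add_le_add (add_le_add_left hx1 _) le_rfl
      _ < ε / 4 + ε / 4 + ε / 4 := by
          refine add_lt_add (add_lt_add_right hx2 _) hjM
      _ < ε := by linarith
  · -- second limit : the expression equals M j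
    have hEq : (fun j => ((N j : ℂ)) ^ (q - 1) *
        ∑ m ∈ Finset.range (N j), ∏ i, (fa i j m / (N j : ℂ))) = M := by
      funext j
      have hNne : ((N j : ℂ)) ≠ 0 := Nat.cast_ne_zero.mpr (hNpos j).ne'
      have hprod : ∀ m, ∏ i : Fin q, (fa i j m / (N j : ℂ))
          = (∏ i : Fin q, fa i j m) / ((N j : ℂ)) ^ q := by
        intro m
        rw [Finset.prod_div_distrib, Finset.prod_const, Finset.card_univ, Fintype.card_fin]
      simp only [hprod]
      rw [← Finset.sum_div]
      rw [hMdef]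
      have hqsplit : ((N j : ℂ)) ^ q = ((N j : ℂ)) ^ (q - 1) * ((N j : ℂ)) := by
        rw [← pow_succ]
        congr 1
        omega
      rw [hqsplit]
      have hpow_ne : ((N j : ℂ)) ^ (q - 1) ≠ 0 := pow_ne_zero _ hNne
      field_simp
    rw [hEq]
    exact hL
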